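/- arXiv:1506.00350 — 2 statements merged into one kernel-verified Lean document; each statement's English description precedes it below -/
import Mathlib

section
/- Let φ(x) = ∑_{n≥0} αₙ xⁿ be a formal power series with complex coefficients such that α₀ = 1 and there exists n ≥ 2 with n!·αₙ ≠ α₁ⁿ (i.e., φ is not of the form e^{γx}). Set p = min{n ≥ 2 : n!·αₙ ≠ α₁ⁿ}, α = α₁, and β = αₚ − α₁ᵖ/p!. Let f be a monic complex polynomial of degree d, and for each positive integer m define the polynomial f_m by f_m(x) = m^{−d/p}·(φ(D)^m f)(m^{1/p}x − mα), where m^{1/p} is the positive real p-th root of m. Then f_m → exp(βD^p)M^d uniformly on compact subsets of ℂ as m → ∞. -/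
open Polynomial Nat Filter Finset



noncomputable def opS (g : PowerSeries ℂ) (f : Polynomial ℂ) : Polynomial ℂ :=
  ∑ n ∈ Finset.range (f.natDegree + 1),
    (PowerSeries.coeff n g) • (Polynomial.derivative^[n] f)

lemma opS_eq_sum (g : PowerSeries ℂ) (f : Polynomial ℂ) {N : ℕ} (h : f.natDegree ≤ N) :
    opS g f = ∑ n ∈ Finset.range (N + 1),
      (PowerSeries.coeff n g) • (Polynomial.derivative^[n] f) := by
  refine Finset.sum_subset (Finset.range_subset_range.2 (by omega)) ?_
  intro n hn hn'
  simp only [Finset.mem_range] at hn hn'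
  rw [Polynomial.iterate_derivative_eq_zero (by omega), smul_zero]

lemma natDegree_opS_le (g : PowerSeries ℂ) (f : Polynomial ℂ) :
    (opS g f).natDegree ≤ f.natDegree := by
  refine Polynomial.natDegree_sum_le_of_forall_le _ _ fun n _ => ?_
  exact (Polynomial.natDegree_smul_le _ _).trans
    ((Polynomial.natDegree_iterate_derivative f n).trans (Nat.sub_le _ _))

lemma iter_deriv_sum {ι : Type*} (s : Finset ι) (F : ι → Polynomial ℂ) (n : ℕ) :
    Polynomial.derivative^[n] (∑ i ∈ s, F i) = ∑ i ∈ s, Polynomial.derivative^[n] (F i) := by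
  induction n with
  | zero => simp
  | succ n ih => simp [Function.iterate_succ_apply', ih, Polynomial.derivative_sum]

lemma opS_mul (g h : PowerSeries ℂ) (f : Polynomial ℂ) :
    opS (g * h) f = opS g (opS h f) := by
  set N := f.natDegree with hN
  set T : ℕ × ℕ → Polynomial ℂ := fun ab =>
    (PowerSeries.coeff ab.1 g * PowerSeries.coeff ab.2 h) •
      Polynomial.derivative^[ab.1 + ab.2] f with hT
  have hTzero : ∀ ab : ℕ × ℕ, N < ab.1 + ab.2 → T ab = 0 := by
    intro ab hab
    rw [hT]
    simp only
    rw [Polynomial.iterate_derivative_eq_zero (by omega), smul_zero]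
  have hdisj : ((Finset.range (N + N + 1) : Finset ℕ) : Set ℕ).PairwiseDisjoint
      (fun s => Finset.HasAntidiagonal.antidiagonal s) := by
    intro s _ t _ hst
    simp only [Function.onFun]
    rw [Finset.disjoint_left]
    rintro ⟨a, b⟩ ha hb
    rw [Finset.HasAntidiagonal.mem_antidiagonal] at ha hb
    exact hst (ha ▸ hb)
  have hL : opS (g * h) f =
      ∑ ab ∈ (Finset.range (N + N + 1)).biUnion (fun s => Finset.HasAntidiagonal.antidiagonal s), T ab := by
    rw [opS_eq_sum _ _ (show N ≤ N + N by omega), Finset.sum_biUnion hdisj]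
    refine Finset.sum_congr rfl fun s _ => ?_
    rw [PowerSeries.coeff_mul, Finset.sum_smul]
    refine Finset.sum_congr rfl fun ab hab => ?_
    rw [Finset.HasAntidiagonal.mem_antidiagonal] at hab
    simp only [hT]
    rw [hab]
  have hR : opS g (opS h f) = ∑ ab ∈ Finset.range (N + 1) ×ˢ Finset.range (N + 1), T ab := by
    rw [Finset.sum_product, opS_eq_sum g (opS h f) ((natDegree_opS_le h f).trans (le_refl N))]
    refine Finset.sum_congr rfl fun n _ => ?_
    rw [opS, ← hN, iter_deriv_sum, Finset.smul_sum]
    refine Finset.sum_congr rfl fun k _ => ?_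
    rw [Polynomial.iterate_derivative_smul, smul_smul, ← Function.iterate_add_apply]
  rw [hL, hR]
  have hsub : Finset.range (N + 1) ×ˢ Finset.range (N + 1) ⊆
      (Finset.range (N + N + 1)).biUnion (fun s => Finset.HasAntidiagonal.antidiagonal s) := by
    rintro ⟨a, b⟩ hab
    simp only [Finset.mem_product, Finset.mem_range] at hab
    simp only [Finset.mem_biUnion, Finset.mem_range, Finset.HasAntidiagonal.mem_antidiagonal]
    exact ⟨a + b, by omega, rfl⟩
  refine (Finset.sum_subset hsub ?_).symm
  rintro ⟨a, b⟩ _ hab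
  simp only [Finset.mem_product, Finset.mem_range] at hab
  exact hTzero (a, b) (by omega)

noncomputable def Eser (c : ℂ) : PowerSeries ℂ := PowerSeries.mk fun n => c ^ n / n !

lemma key_sum (c e : ℂ) (n : ℕ) :
    ∑ ab ∈ Finset.HasAntidiagonal.antidiagonal n, (c ^ ab.1 / ab.1 !) * (e ^ ab.2 / ab.2 !) =
      (c + e) ^ n / n ! := by
  rw [Finset.Nat.sum_antidiagonal_eq_sum_range_succ_mk, add_pow]
  rw [Finset.sum_div]
  refine Finset.sum_congr rfl fun i hi => ?_
  rw [Finset.mem_range] at hi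
  have hin : i ≤ n := by omega
  rw [Nat.cast_choose ℂ hin]
  have h1 : (i ! : ℂ) ≠ 0 := Nat.cast_ne_zero.2 (Nat.factorial_ne_zero _)
  have h2 : ((n - i)! : ℂ) ≠ 0 := Nat.cast_ne_zero.2 (Nat.factorial_ne_zero _)
  have h3 : (n ! : ℂ) ≠ 0 := Nat.cast_ne_zero.2 (Nat.factorial_ne_zero _)
  field_simp

lemma coeff_Eser (c : ℂ) (n : ℕ) : PowerSeries.coeff n (Eser c) = c ^ n / n ! := by
  simp [Eser]

lemma Eser_mul (c e : ℂ) : Eser c * Eser e = Eser (c + e) := by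
  ext n
  rw [PowerSeries.coeff_mul, coeff_Eser]
  rw [← key_sum c e n]
  refine Finset.sum_congr rfl fun ab _ => ?_
  rw [coeff_Eser, coeff_Eser]

lemma Eser_zero : Eser 0 = 1 := by
  ext n
  rw [coeff_Eser, PowerSeries.coeff_one]
  rcases n with _ | n <;> simp

lemma Eser_pow (c : ℂ) (m : ℕ) : (Eser c) ^ m = Eser (m * c) := by
  induction m with
  | zero => simp [Eser_zero]
  | succ m ih =>
      rw [pow_succ, ih, Eser_mul]
      congr 1
      push_cast
      ring

lemma hasse_eval (q : Polynomial ℂ) (n : ℕ) (y : ℂ) :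
    (Polynomial.hasseDeriv n q).eval y = (Polynomial.derivative^[n] q).eval y / n ! := by
  have h := congrFun (Polynomial.factorial_smul_hasseDeriv (R := ℂ) n) q
  simp only [LinearMap.smul_apply] at h
  rw [← h]
  rw [Polynomial.eval_smul, nsmul_eq_mul]
  have h1 : (n ! : ℂ) ≠ 0 := Nat.cast_ne_zero.2 (Nat.factorial_ne_zero _)
  field_simp

lemma eval_opS_Eser (c y : ℂ) (q : Polynomial ℂ) :
    (opS (Eser c) q).eval y = q.eval (y + c) := by
  have h1 : q.eval (y + c) = (Polynomial.taylor y q).eval c := by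
    rw [Polynomial.taylor_eval, add_comm]
  have h2 : (Polynomial.taylor y q).eval c =
      ∑ n ∈ Finset.range (q.natDegree + 1), (Polynomial.taylor y q).coeff n * c ^ n := by
    refine Polynomial.eval_eq_sum_range' ?_ c
    rw [Polynomial.natDegree_taylor]
    omega
  rw [h1, h2, opS, Polynomial.eval_finset_sum]
  refine Finset.sum_congr rfl fun n _ => ?_
  rw [Polynomial.taylor_coeff, hasse_eval, coeff_Eser, Polynomial.eval_smul, smul_eq_mul]
  ring

lemma coeff_pow_eq_zero (σ : PowerSeries ℂ) (p : ℕ)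
    (hσ : ∀ b, b < p → PowerSeries.coeff b σ = 0) :
    ∀ i n, n < i * p → PowerSeries.coeff n (σ ^ i) = 0 := by
  intro i
  induction i with
  | zero => intro n hn; omega
  | succ i ih =>
      intro n hn
      rw [Nat.succ_mul] at hn
      rw [pow_succ, PowerSeries.coeff_mul]
      refine Finset.sum_eq_zero fun ab hab => ?_
      rw [Finset.HasAntidiagonal.mem_antidiagonal] at hab
      by_cases h : ab.1 < i * p
      · rw [ih _ h, zero_mul]
      · rw [hσ ab.2 (by omega), mul_zero]

lemma coeff_pow_top (σ : PowerSeries ℂ) (p : ℕ) (hp : 0 < p)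
    (hσ : ∀ b, b < p → PowerSeries.coeff b σ = 0) (i : ℕ) :
    PowerSeries.coeff (i * p) (σ ^ i) = (PowerSeries.coeff p σ) ^ i := by
  induction i with
  | zero => simp
  | succ i ih =>
      have hsm : (i + 1) * p = i * p + p := by ring
      rw [pow_succ, PowerSeries.coeff_mul, hsm]
      rw [Finset.sum_eq_single (i * p, p)]
      · rw [ih, pow_succ]
      · rintro ⟨a, b⟩ hab hne
        rw [Finset.HasAntidiagonal.mem_antidiagonal] at hab
        simp only at hab ⊢
        by_cases h : a < i * p
        · rw [coeff_pow_eq_zero σ p hσ i a h, zero_mul]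
        · by_cases h2 : b < p
          · rw [hσ b h2, mul_zero]
          · exfalso; apply hne
            have : a = i * p := by omega
            have : b = p := by omega
            simp_all
      · intro h
        exact absurd (Finset.HasAntidiagonal.mem_antidiagonal.2 (rfl : i * p + p = i * p + p)) h

lemma coeff_pow_binom (QS : PowerSeries ℂ) (p : ℕ) (hp : 1 ≤ p)
    (hσ : ∀ b, b < p → PowerSeries.coeff b (QS - 1) = 0) (m n : ℕ) :
    PowerSeries.coeff n (QS ^ m) =
      ∑ i ∈ Finset.range (n + 1),
        (m.choose i : ℂ) * PowerSeries.coeff n ((QS - 1) ^ i) := by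
  have hQS : QS ^ m = ((QS - 1) + 1) ^ m := by ring_nf
  rw [hQS, add_pow, map_sum]
  have hterm : ∀ i, PowerSeries.coeff n ((QS - 1) ^ i * 1 ^ (m - i) * (m.choose i : PowerSeries ℂ)) =
      (m.choose i : ℂ) * PowerSeries.coeff n ((QS - 1) ^ i) := by
    intro i
    rw [one_pow, mul_one]
    rw [show ((m.choose i : ℕ) : PowerSeries ℂ) = PowerSeries.C ((m.choose i : ℕ) : ℂ) by
      rw [map_natCast]]
    rw [PowerSeries.coeff_mul_C]
    ring
  have e1 : ∑ i ∈ Finset.range (m + 1),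
        PowerSeries.coeff n ((QS - 1) ^ i * 1 ^ (m - i) * (m.choose i : PowerSeries ℂ)) =
      ∑ i ∈ Finset.range (m + n + 1), (m.choose i : ℂ) * PowerSeries.coeff n ((QS - 1) ^ i) := by
    rw [Finset.sum_congr rfl fun i _ => hterm i]
    refine Finset.sum_subset (Finset.range_subset_range.2 (by omega)) ?_
    intro i hi hi'
    simp only [Finset.mem_range] at hi hi'
    rw [Nat.choose_eq_zero_of_lt (by omega), Nat.cast_zero, zero_mul]
  rw [e1]
  symm
  refine Finset.sum_subset (M := ℂ) (Finset.range_subset_range.2 (show n + 1 ≤ m + n + 1 by omega)) ?_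
  intro i hi hi'
  simp only [Finset.mem_range] at hi hi'
  rw [coeff_pow_eq_zero _ p hσ i n (by nlinarith), mul_zero]

lemma choose_div_pow_tendsto (i : ℕ) :
    Tendsto (fun m : ℕ => (m.choose i : ℝ) / (m : ℝ) ^ i) atTop
      (nhds (1 / (i ! : ℝ))) := by
  have hmain : Tendsto (fun m : ℕ => (1 / (i ! : ℝ)) * ∏ t ∈ Finset.range i, (1 - (t : ℝ) / m))
      atTop (nhds ((1 / (i ! : ℝ)) * ∏ t ∈ Finset.range i, (1 : ℝ))) := by
    refine Tendsto.const_mul _ (tendsto_finset_prod _ fun t _ => ?_)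
    have := (tendsto_const_div_atTop_nhds_zero_nat (t : ℝ)).const_sub 1
    simpa using this
  rw [Finset.prod_const_one, mul_one] at hmain
  refine Tendsto.congr' ?_ hmain
  filter_upwards [eventually_ge_atTop (max i 1)] with m hm
  have hmi : i ≤ m := le_trans (le_max_left _ _) hm
  have hm1 : 1 ≤ m := le_trans (le_max_right _ _) hm
  have hm0 : (m : ℝ) ≠ 0 := by positivity
  have hdesc : (m.choose i : ℝ) = (m.descFactorial i : ℝ) / (i ! : ℝ) := by
    rw [Nat.descFactorial_eq_factorial_mul_choose]
    push_cast
    field_simp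
  have hprod : (m.descFactorial i : ℝ) = ∏ t ∈ Finset.range i, ((m : ℝ) - t) := by
    rw [Nat.descFactorial_eq_prod_range]
    push_cast
    refine Finset.prod_congr rfl fun t ht => ?_
    rw [Finset.mem_range] at ht
    rw [Nat.cast_sub (by omega)]
  rw [hdesc, hprod]
  have hpp : ∏ t ∈ Finset.range i, (1 - (t : ℝ) / m) =
      (∏ t ∈ Finset.range i, ((m : ℝ) - t)) / (m : ℝ) ^ i := by
    rw [show ((m : ℝ)) ^ i = ∏ _t ∈ Finset.range i, (m : ℝ) by
      rw [Finset.prod_const, Finset.card_range], ← Finset.prod_div_distrib]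
    refine Finset.prod_congr rfl fun t ht => ?_
    field_simp
  rw [hpp]
  ring

lemma w_tendsto_zero (i j p : ℕ) (hp : 0 < p) (hlt : i * p < j) :
    Tendsto (fun m : ℕ => ((m : ℝ) ^ (-(j : ℝ) / (p : ℝ)) * (m.choose i : ℝ))) atTop
      (nhds 0) := by
  have hexp : (i : ℝ) - (j : ℝ) / (p : ℝ) < 0 := by
    rw [sub_neg, lt_div_iff₀ (by positivity)]
    exact_mod_cast by exact_mod_cast Nat.cast_lt.2 hlt
  have h2 : Tendsto (fun m : ℕ => ((m : ℝ) ^ ((i : ℝ) - (j : ℝ) / (p : ℝ)))) atTop (nhds 0) := by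
    have := tendsto_rpow_neg_atTop (y := -((i : ℝ) - (j : ℝ) / (p : ℝ))) (by linarith)
    simp only [neg_neg] at this
    exact this.comp tendsto_natCast_atTop_atTop
  have hmain := (choose_div_pow_tendsto i).mul h2
  rw [mul_zero] at hmain
  refine Tendsto.congr' ?_ hmain
  filter_upwards [eventually_ge_atTop 1] with m hm
  have hm0 : (0 : ℝ) < (m : ℝ) := by exact_mod_cast hm
  have hsplit : (m : ℝ) ^ ((i : ℝ) - (j : ℝ) / (p : ℝ)) =
      (m : ℝ) ^ (i : ℕ) * (m : ℝ) ^ (-(j : ℝ) / (p : ℝ)) := by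
    rw [← Real.rpow_natCast (m : ℝ) i, ← Real.rpow_add hm0]
    congr 1
    ring
  rw [hsplit]
  have hne : ((m : ℝ)) ^ i ≠ 0 := by positivity
  field_simp

lemma w_tendsto_fact (i j p : ℕ) (hp : 0 < p) (heq : i * p = j) :
    Tendsto (fun m : ℕ => ((m : ℝ) ^ (-(j : ℝ) / (p : ℝ)) * (m.choose i : ℝ))) atTop
      (nhds (1 / (i ! : ℝ))) := by
  refine Tendsto.congr' ?_ (choose_div_pow_tendsto i)
  filter_upwards [eventually_ge_atTop 1] with m hm
  have hm0 : (0 : ℝ) < (m : ℝ) := by exact_mod_cast hm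
  have hexp : -(j : ℝ) / (p : ℝ) = -(i : ℝ) := by
    subst heq
    push_cast
    field_simp
  rw [hexp, Real.rpow_neg hm0.le, Real.rpow_natCast]
  field_simp

lemma tuo_sum {ι : Type*} (K : Set ℂ) (s : Finset ι) (F : ι → ℕ → ℂ → ℂ) (G : ι → ℂ → ℂ)
    (h : ∀ i ∈ s, TendstoUniformlyOn (F i) (G i) atTop K) :
    TendstoUniformlyOn (fun m x => ∑ i ∈ s, F i m x) (fun x => ∑ i ∈ s, G i x) atTop K := by
  classical
  induction s using Finset.induction with
  | empty =>
      simp only [Finset.sum_empty]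
      intro u hu
      filter_upwards [] with m x _
      exact refl_mem_uniformity hu
  | insert a t hni ih =>
      simp only [Finset.sum_insert hni]
      exact (h a (Finset.mem_insert_self a t)).add
        (ih fun i hi => h i (Finset.mem_insert_of_mem hi))

lemma tuo_monomial (K : Set ℂ) (R : ℝ) (hK : ∀ x ∈ K, ‖x‖ ≤ R) (k : ℕ)
    (u : ℕ → ℂ) (v : ℂ) (h : Tendsto u atTop (nhds v)) :
    TendstoUniformlyOn (fun m x => u m * x ^ k) (fun x => v * x ^ k) atTop K := by
  set R' := max R 0 with hR'
  have hK' : ∀ x ∈ K, ‖x‖ ≤ R' := fun x hx => (hK x hx).trans (le_max_left _ _)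
  have hR0 : (0 : ℝ) ≤ R' := le_max_right _ _
  have hC : (0 : ℝ) < R' ^ k + 1 := by positivity
  rw [Metric.tendstoUniformlyOn_iff]
  intro ε hε
  have hev := Metric.tendsto_nhds.mp h (ε / (2 * (R' ^ k + 1))) (by positivity)
  filter_upwards [hev] with m hm x hx
  have h1 : dist (v * x ^ k) (u m * x ^ k) = ‖v - u m‖ * ‖x‖ ^ k := by
    rw [dist_eq_norm, ← sub_mul, norm_mul, norm_pow]
  have h2 : ‖v - u m‖ < ε / (2 * (R' ^ k + 1)) := by
    rw [← dist_eq_norm']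
    exact hm
  have h3 : ‖x‖ ^ k ≤ R' ^ k + 1 := by
    have := pow_le_pow_left₀ (norm_nonneg x) (hK' x hx) k
    linarith
  calc dist (v * x ^ k) (u m * x ^ k) = ‖v - u m‖ * ‖x‖ ^ k := h1
    _ ≤ (ε / (2 * (R' ^ k + 1))) * (R' ^ k + 1) :=
        mul_le_mul h2.le h3 (by positivity) (by positivity)
    _ = ε / 2 := by field_simp
    _ < ε := by linarith

lemma tlu_of_coeff (d : ℕ) (u : ℕ → ℕ → ℂ) (v : ℕ → ℂ)
    (h : ∀ k, k ∈ Finset.range (d + 1) → Tendsto (fun m => u m k) atTop (nhds (v k))) :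
    TendstoLocallyUniformly (fun m x => ∑ k ∈ Finset.range (d + 1), u m k * x ^ k)
      (fun x => ∑ k ∈ Finset.range (d + 1), v k * x ^ k) atTop := by
  rw [tendstoLocallyUniformly_iff_forall_isCompact]
  intro K hK
  obtain ⟨R, hR⟩ := hK.isBounded.exists_norm_le
  exact tuo_sum K _ _ _ fun k hk => tuo_monomial K R hR k _ _ (h k hk)

lemma opS_one (f : Polynomial ℂ) : opS 1 f = f := by
  rw [opS, Finset.sum_eq_single 0]
  · simp
  · intro n _ hn
    rw [PowerSeries.coeff_one, if_neg hn, zero_smul]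
  · simp

/-- `φ(D)f = ∑ₙ αₙ f⁽ⁿ⁾` (a finite sum). -/
noncomputable def phiD (α : ℕ → ℂ) (f : Polynomial ℂ) : Polynomial ℂ :=
  ∑ n ∈ Finset.range (f.natDegree + 1), α n • (Polynomial.derivative^[n] f)

/-- The polynomial `exp(βD^p)M^d`, i.e. `∑_{k=0}^{⌊d/p⌋} (d!·βᵏ/(k!·(d−pk)!))·x^{d−pk}`. -/
noncomputable def expD (β : ℂ) (p d : ℕ) : Polynomial ℂ :=
  ∑ k ∈ Finset.range (d / p + 1),
    Polynomial.C ((d ! : ℂ) * β ^ k / ((k ! : ℂ) * ((d - p * k)! : ℂ))) *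
      Polynomial.X ^ (d - p * k)

lemma natDegree_expD_le (β : ℂ) (p d : ℕ) : (expD β p d).natDegree ≤ d := by
  refine Polynomial.natDegree_sum_le_of_forall_le _ _ fun k _ => ?_
  exact (Polynomial.natDegree_C_mul_X_pow_le _ _).trans (Nat.sub_le _ _)

/-- Theorem 2.1: with `p = min{n ≥ 2 : n!·αₙ ≠ α₁ⁿ}`, `α = α₁`, `β = αₚ − α₁ᵖ/p!`, and `f`
monic of degree `d`, the rescaled polynomials
`f_m(x) = m^{−d/p}·(φ(D)^m f)(m^{1/p}x − mα)` converge to `exp(βD^p)M^d`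
uniformly on compact subsets of `ℂ`. -/
theorem stmt3 (α : ℕ → ℂ) (h0 : α 0 = 1)
    (p : ℕ) (hp2 : 2 ≤ p)
    (hpne : (p ! : ℂ) * α p ≠ (α 1) ^ p)
    (hpmin : ∀ n, 2 ≤ n → n < p → (n ! : ℂ) * α n = (α 1) ^ n)
    (f : Polynomial ℂ) (hf : f.Monic) (d : ℕ) (hd : f.natDegree = d) :
    TendstoLocallyUniformly
      (fun (m : ℕ) (x : ℂ) =>
        ((((m : ℝ) ^ (-(d : ℝ) / (p : ℝ))) : ℝ) : ℂ) *
          (((phiD α)^[m] f).eval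
            (((((m : ℝ) ^ ((1 : ℝ) / (p : ℝ))) : ℝ) : ℂ) * x - (m : ℂ) * α 1)))
      (fun x => (expD (α p - (α 1) ^ p / (p ! : ℂ)) p d).eval x) Filter.atTop := by
  have hp0 : 0 < p := by omega
  set β : ℂ := α p - (α 1) ^ p / (p ! : ℂ) with hβ
  set PS : PowerSeries ℂ := PowerSeries.mk α with hPSdef
  set QS : PowerSeries ℂ := PS * Eser (-α 1) with hQSdef
  have hfact : ∀ n : ℕ, ((n ! : ℂ)) ≠ 0 := fun n => Nat.cast_ne_zero.2 (Nat.factorial_ne_zero _)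
  -- small coefficients of QS are those of exp
  have hα : ∀ a, a < p → α a = (α 1) ^ a / (a ! : ℂ) := by
    intro a ha
    match a with
    | 0 => simpa using h0
    | 1 => simp
    | (n+2) =>
        rw [eq_div_iff (hfact _), mul_comm, hpmin (n+2) (by omega) ha]
  have hQS0 : PowerSeries.coeff 0 QS = 1 := by
    rw [hQSdef, PowerSeries.coeff_mul]
    simp [hPSdef, PowerSeries.coeff_mk, coeff_Eser, h0]
  have hQSsmall : ∀ b, 1 ≤ b → b < p → PowerSeries.coeff b QS = 0 := by
    intro b hb1 hbp
    rw [hQSdef, PowerSeries.coeff_mul]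
    have he : ∀ ab : ℕ × ℕ, ab ∈ Finset.HasAntidiagonal.antidiagonal b →
        PowerSeries.coeff ab.1 PS * PowerSeries.coeff ab.2 (Eser (-α 1)) =
          ((α 1) ^ ab.1 / (ab.1 ! : ℂ)) * ((-α 1) ^ ab.2 / (ab.2 ! : ℂ)) := by
      rintro ⟨a, c⟩ hab
      rw [Finset.HasAntidiagonal.mem_antidiagonal] at hab
      rw [hPSdef, PowerSeries.coeff_mk, coeff_Eser, hα a (by omega)]
    rw [Finset.sum_congr rfl he, key_sum]
    rw [add_neg_cancel, zero_pow (by omega), zero_div]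
  have hσ : ∀ b, b < p → PowerSeries.coeff b (QS - 1) = 0 := by
    intro b hbp
    rw [map_sub]
    match b with
    | 0 => rw [hQS0, PowerSeries.coeff_zero_eq_constantCoeff_apply, map_one, sub_self]
    | (n+1) =>
        rw [hQSsmall (n+1) (by omega) hbp, PowerSeries.coeff_one, if_neg (by omega), sub_zero]
  have hQSp : PowerSeries.coeff p (QS - 1) = β := by
    have hc1 : PowerSeries.coeff p (1 : PowerSeries ℂ) = 0 := by
      rw [PowerSeries.coeff_one, if_neg (by omega)]
    rw [map_sub, hc1, sub_zero, hQSdef, PowerSeries.coeff_mul]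
    set F : ℕ × ℕ → ℂ := fun ab => PowerSeries.coeff ab.1 PS *
      PowerSeries.coeff ab.2 (Eser (-α 1)) with hF
    set G : ℕ × ℕ → ℂ := fun ab => ((α 1) ^ ab.1 / (ab.1 ! : ℂ)) *
      ((-α 1) ^ ab.2 / (ab.2 ! : ℂ)) with hG
    have hmem : ((p, 0) : ℕ × ℕ) ∈ Finset.HasAntidiagonal.antidiagonal p :=
      Finset.HasAntidiagonal.mem_antidiagonal.2 (by omega)
    have hsumG : ∑ ab ∈ Finset.HasAntidiagonal.antidiagonal p, G ab = 0 := by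
      rw [hG, key_sum, add_neg_cancel, zero_pow (by omega), zero_div]
    have herase : ∑ ab ∈ (Finset.HasAntidiagonal.antidiagonal p).erase (p, 0), F ab =
        ∑ ab ∈ (Finset.HasAntidiagonal.antidiagonal p).erase (p, 0), G ab := by
      refine Finset.sum_congr rfl ?_
      rintro ⟨a, c⟩ hab
      have h1 := Finset.mem_of_mem_erase hab
      have h2 := Finset.ne_of_mem_erase hab
      rw [Finset.HasAntidiagonal.mem_antidiagonal] at h1
      have hap : a < p := by
        rcases Nat.lt_or_ge a p with h | h
        · exact h
        · exfalso; apply h2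
          have : a = p := by omega
          have : c = 0 := by omega
          simp_all
      rw [hF, hG, hPSdef]
      simp only
      rw [PowerSeries.coeff_mk, coeff_Eser, hα a hap]
    have e1 : F (p, 0) + ∑ ab ∈ (Finset.HasAntidiagonal.antidiagonal p).erase (p, 0), F ab =
        ∑ ab ∈ Finset.HasAntidiagonal.antidiagonal p, F ab := Finset.add_sum_erase _ F hmem
    have e2 : G (p, 0) + ∑ ab ∈ (Finset.HasAntidiagonal.antidiagonal p).erase (p, 0), G ab =
        ∑ ab ∈ Finset.HasAntidiagonal.antidiagonal p, G ab := Finset.add_sum_erase _ G hmem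
    have hFp : F (p, 0) = α p := by
      rw [hF, hPSdef]; simp [coeff_Eser]
    have hGp : G (p, 0) = (α 1) ^ p / (p ! : ℂ) := by
      rw [hG]; simp
    rw [hsumG] at e2
    rw [← e1, herase, hFp, hβ]
    rw [hGp] at e2
    linear_combination e2
  -- PS in terms of QS
  have hPSQS : PS = Eser (α 1) * QS := by
    rw [hQSdef]
    have : Eser (α 1) * (PS * Eser (-α 1)) = PS * (Eser (α 1) * Eser (-α 1)) := by ring
    rw [this, Eser_mul, add_neg_cancel, Eser_zero, mul_one]
  -- iterates of phiD
  have hphiD_eq : ∀ g : Polynomial ℂ, phiD α g = opS PS g := by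
    intro g
    rw [phiD, opS, hPSdef]
    refine Finset.sum_congr rfl fun n _ => ?_
    rw [PowerSeries.coeff_mk]
  have hiter : ∀ m : ℕ, (phiD α)^[m] f = opS (PS ^ m) f := by
    intro m
    induction m with
    | zero => rw [Function.iterate_zero_apply, pow_zero, opS_one]
    | succ m ih =>
        rw [Function.iterate_succ_apply', ih, hphiD_eq, ← opS_mul, ← _root_.pow_succ']
  have hdeg : ∀ m : ℕ, (opS (QS ^ m) f).natDegree < d + 1 := by
    intro m
    have := natDegree_opS_le (QS ^ m) f
    omega
  have hEval : ∀ (m : ℕ) (y : ℂ),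
      (opS (PS ^ m) f).eval (y - (m : ℂ) * α 1) = (opS (QS ^ m) f).eval y := by
    intro m y
    rw [hPSQS, mul_pow, Eser_pow, opS_mul, eval_opS_Eser, sub_add_cancel]
  -- coefficient expansion
  have hcoeff : ∀ (m : ℕ) (k : ℕ), (opS (QS ^ m) f).coeff k =
      ∑ n ∈ Finset.range (d + 1), PowerSeries.coeff n (QS ^ m) *
        ((((k + n).descFactorial n : ℕ) : ℂ) * f.coeff (k + n)) := by
    intro m k
    rw [opS, hd, Polynomial.finset_sum_coeff]
    refine Finset.sum_congr rfl fun n _ => ?_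
    rw [Polynomial.coeff_smul, Polynomial.coeff_iterate_derivative, smul_eq_mul, nsmul_eq_mul]
  set u : ℕ → ℕ → ℂ := fun m k =>
    ((((m : ℝ) ^ (-(d : ℝ) / (p : ℝ))) : ℝ) : ℂ) *
      ((((m : ℝ) ^ ((1 : ℝ) / (p : ℝ))) : ℝ) : ℂ) ^ k * (opS (QS ^ m) f).coeff k with hu
  set v : ℕ → ℂ := fun k => (expD β p d).coeff k with hv
  have hconv : ∀ k, k ∈ Finset.range (d + 1) →
      Tendsto (fun m => u m k) atTop (nhds (v k)) := by
    intro k hkmem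
    rw [Finset.mem_range] at hkmem
    have hkd : k ≤ d := by omega
    set j : ℕ := d - k with hj
    set Γ : ℕ → ℕ → ℂ := fun i n => PowerSeries.coeff n ((QS - 1) ^ i) with hΓ
    set Dc : ℕ → ℂ := fun n => (((k + n).descFactorial n : ℕ) : ℂ) * f.coeff (k + n) with hDc
    set L : ℕ → ℕ → ℂ := fun n i =>
      if n = j ∧ i * p = j then (1 / (i ! : ℂ)) * (Γ i n * Dc n) else 0 with hL
    set S : ℕ → ℂ := fun m => ∑ n ∈ Finset.range (d + 1), ∑ i ∈ Finset.range (n + 1),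
      ((((m : ℝ) ^ (-(j : ℝ) / (p : ℝ))) : ℝ) : ℂ) * ((m.choose i : ℕ) : ℂ) * (Γ i n * Dc n)
      with hS
    have hueq : (fun m => u m k) =ᶠ[atTop] S := by
      filter_upwards [eventually_ge_atTop 1] with m hm
      have hm0 : (0 : ℝ) < (m : ℝ) := by exact_mod_cast hm
      have hpre : ((((m : ℝ) ^ (-(d : ℝ) / (p : ℝ))) : ℝ) : ℂ) *
          ((((m : ℝ) ^ ((1 : ℝ) / (p : ℝ))) : ℝ) : ℂ) ^ k =
          ((((m : ℝ) ^ (-(j : ℝ) / (p : ℝ))) : ℝ) : ℂ) := by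
        rw [← Complex.ofReal_pow, ← Complex.ofReal_mul]
        congr 1
        rw [← Real.rpow_natCast ((m : ℝ) ^ ((1:ℝ)/(p:ℝ))) k, ← Real.rpow_mul hm0.le,
          ← Real.rpow_add hm0]
        congr 1
        have hjc : (j : ℝ) = (d : ℝ) - (k : ℝ) := by
          rw [hj, Nat.cast_sub hkd]
        rw [hjc]; ring
      simp only [hu, hS]
      rw [hpre, hcoeff m k]
      rw [Finset.mul_sum]
      refine Finset.sum_congr rfl fun n _ => ?_
      rw [coeff_pow_binom QS p (by omega) hσ m n, Finset.sum_mul, Finset.mul_sum]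
      refine Finset.sum_congr rfl fun i _ => ?_
      simp only [hΓ, hDc]
      ring
    have hSlim : Tendsto S atTop
        (nhds (∑ n ∈ Finset.range (d + 1), ∑ i ∈ Finset.range (n + 1), L n i)) := by
      rw [hS]
      refine tendsto_finset_sum _ fun n _ => tendsto_finset_sum _ fun i hi => ?_
      by_cases hc : Γ i n * Dc n = 0
      · have hL0 : L n i = 0 := by
          simp only [hL]; split_ifs with h
          · simp only [hc, mul_zero]
          · rfl
        rw [hc, hL0]
        simp only [mul_zero]
        exact tendsto_const_nhds
      · have hΓne : Γ i n ≠ 0 := fun h => hc (by rw [h, zero_mul])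
        have hDne : Dc n ≠ 0 := fun h => hc (by rw [h, mul_zero])
        have hip_le : i * p ≤ n := by
          by_contra hcon
          exact hΓne (coeff_pow_eq_zero (QS - 1) p hσ i n (by omega))
        have hn_le : n ≤ j := by
          have hfc : f.coeff (k + n) ≠ 0 := by
            intro h
            apply hDne
            simp only [hDc, h, mul_zero]
          have := Polynomial.le_natDegree_of_ne_zero hfc
          omega
        have hbridge : ∀ r : ℝ,
            Tendsto (fun m : ℕ => ((m : ℝ) ^ (-(j : ℝ) / (p : ℝ)) * (m.choose i : ℝ))) atTop
              (nhds r) →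
            Tendsto (fun m : ℕ => ((((m : ℝ) ^ (-(j : ℝ) / (p : ℝ))) : ℝ) : ℂ) *
              ((m.choose i : ℕ) : ℂ)) atTop (nhds (r : ℂ)) := by
          intro r hr
          have h2 := (Complex.continuous_ofReal.tendsto r).comp hr
          refine h2.congr fun m => ?_
          simp only [Function.comp_def, Complex.ofReal_mul, Complex.ofReal_natCast]
        rcases Nat.lt_or_ge (i * p) j with hlt | hge
        · have hw := hbridge 0 (w_tendsto_zero i j p hp0 hlt)
          have hLval : L n i = 0 := by
            simp only [hL]
            split_ifs with h
            · exfalso; omega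
            · rfl
          rw [hLval]
          have h3 := hw.mul_const (Γ i n * Dc n)
          simpa using h3
        · have heq2 : i * p = j := by omega
          have hn_eq : n = j := by omega
          have hw := hbridge (1 / (i ! : ℝ)) (w_tendsto_fact i j p hp0 heq2)
          have hLval : L n i = (1 / (i ! : ℂ)) * (Γ i n * Dc n) := by
            simp only [hL]; rw [if_pos ⟨hn_eq, heq2⟩]
          rw [hLval]
          have h3 := hw.mul_const (Γ i n * Dc n)
          have hcast : ((1 / (i ! : ℝ) : ℝ) : ℂ) = 1 / (i ! : ℂ) := by push_cast; ring
          rw [hcast] at h3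
          exact h3
    have hco : v k = ∑ k' ∈ Finset.range (d / p + 1),
        (if k = d - p * k' then (d ! : ℂ) * β ^ k' / ((k' ! : ℂ) * ((d - p * k')! : ℂ))
          else 0) := by
      rw [hv]
      simp only
      rw [expD, Polynomial.finset_sum_coeff]
      refine Finset.sum_congr rfl fun k' _ => ?_
      rw [Polynomial.coeff_C_mul, Polynomial.coeff_X_pow, mul_ite, mul_one, mul_zero]
    have hvk : ∑ n ∈ Finset.range (d + 1), ∑ i ∈ Finset.range (n + 1), L n i = v k := by
      by_cases hdvd : p ∣ j
      · set i0 : ℕ := j / p with hi0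
        have hi0p : p * i0 = j := Nat.mul_div_cancel' hdvd
        have hi0p' : i0 * p = j := by rw [mul_comm]; exact hi0p
        have hjd : j ≤ d := by omega
        have hrhs2 : v k = (d ! : ℂ) * β ^ i0 / ((i0 ! : ℂ) * ((k)! : ℂ)) := by
          rw [hco, Finset.sum_eq_single i0]
          · rw [if_pos (show k = d - p * i0 by rw [hi0p]; omega)]
            rw [show d - p * i0 = k by rw [hi0p]; omega]
          · intro k' hk' hne
            rw [Finset.mem_range] at hk'
            have h1 : p * k' ≤ d := by
              rw [mul_comm p k']
              exact (Nat.le_div_iff_mul_le hp0).1 (by omega)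
            refine if_neg fun h => hne ?_
            have h2 : p * k' = p * i0 := by omega
            exact Nat.eq_of_mul_eq_mul_left hp0 h2
          · intro hni
            exfalso; apply hni
            rw [Finset.mem_range]
            have : j / p ≤ d / p := Nat.div_le_div_right hjd
            omega
        have hlhs : ∑ n ∈ Finset.range (d + 1), ∑ i ∈ Finset.range (n + 1), L n i =
            (1 / (i0 ! : ℂ)) * (Γ i0 j * Dc j) := by
          rw [Finset.sum_eq_single j]
          · rw [Finset.sum_eq_single i0]
            · simp only [hL]
              rw [if_pos (show True ∧ i0 * p = j from ⟨trivial, hi0p'⟩)]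
            · intro i hi hne
              simp only [hL]
              refine if_neg fun h => hne ?_
              have h2 : i * p = i0 * p := by
                rw [hi0p']
                exact h.2
              exact Nat.eq_of_mul_eq_mul_right hp0 h2
            · intro hni
              exfalso; apply hni
              rw [Finset.mem_range]
              have := Nat.div_le_self j p
              omega
          · intro n hn hne
            exact Finset.sum_eq_zero fun i _ => by
              simp only [hL]; exact if_neg fun h => hne h.1
          · intro hnj
            exfalso; apply hnj; rw [Finset.mem_range]; omega
        have hΓval : Γ i0 j = β ^ i0 := by
          simp only [hΓ]
          rw [← hi0p', coeff_pow_top (QS - 1) p hp0 hσ i0, hQSp]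
        have hDval : Dc j = ((d.descFactorial j : ℕ) : ℂ) := by
          simp only [hDc]
          rw [show k + j = d by omega,
            show f.coeff d = 1 from by rw [← hd]; exact hf.coeff_natDegree, mul_one]
        have hdesc : ((d.descFactorial j : ℕ) : ℂ) = (d ! : ℂ) / (k ! : ℂ) := by
          rw [Nat.descFactorial_eq_factorial_mul_choose, Nat.cast_mul,
            Nat.cast_choose ℂ hjd, show d - j = k by omega]
          have h1 := hfact j
          have h2 := hfact k
          field_simp
        rw [hlhs, hΓval, hDval, hdesc, hrhs2]
        have h1 := hfact i0
        have h2 := hfact k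
        field_simp
      · have hlhs : ∑ n ∈ Finset.range (d + 1), ∑ i ∈ Finset.range (n + 1), L n i = 0 := by
          refine Finset.sum_eq_zero fun n _ => Finset.sum_eq_zero fun i _ => ?_
          simp only [hL]
          refine if_neg fun h => hdvd ⟨i, ?_⟩
          rw [← h.2]
          exact mul_comm i p
        have hrhs0 : v k = 0 := by
          rw [hco]
          refine Finset.sum_eq_zero fun k' hk' => ?_
          rw [Finset.mem_range] at hk'
          have h1 : p * k' ≤ d := by
            rw [mul_comm p k']
            exact (Nat.le_div_iff_mul_le hp0).1 (by omega)
          refine if_neg fun h => hdvd ⟨k', ?_⟩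
          omega
        rw [hlhs, hrhs0]
    rw [← hvk]
    exact hSlim.congr' hueq.symm
  have hfun : (fun (m : ℕ) (x : ℂ) =>
        ((((m : ℝ) ^ (-(d : ℝ) / (p : ℝ))) : ℝ) : ℂ) *
          (((phiD α)^[m] f).eval
            (((((m : ℝ) ^ ((1 : ℝ) / (p : ℝ))) : ℝ) : ℂ) * x - (m : ℂ) * α 1))) =
      fun (m : ℕ) (x : ℂ) => ∑ k ∈ Finset.range (d + 1), u m k * x ^ k := by
    funext m x
    rw [hiter m, hEval m (((((m : ℝ) ^ ((1 : ℝ) / (p : ℝ))) : ℝ) : ℂ) * x)]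
    rw [Polynomial.eval_eq_sum_range' (hdeg m)]
    rw [Finset.mul_sum]
    refine Finset.sum_congr rfl fun k _ => ?_
    rw [hu, mul_pow (a := ((((m : ℝ) ^ ((1 : ℝ) / (p : ℝ))) : ℝ) : ℂ))]
    ring
  have hrhs : (fun x : ℂ => (expD β p d).eval x) =
      fun x : ℂ => ∑ k ∈ Finset.range (d + 1), v k * x ^ k := by
    funext x
    exact Polynomial.eval_eq_sum_range' (by have := natDegree_expD_le β p d; omega) x
  rw [hfun, hrhs]
  exact tlu_of_coeff d u v hconv
end

section
/- Let φ be a formal power series with complex coefficients, let f and g be complex polynomials such that neither φ(D)f nor φ(D)g is identically 0, let a₁, …, a_N be zeros of φ(D)f and let b be a zero of φ(D)g. Then for every c ∈ ℂ the polynomial φ(D)(f·T^c g) is not identically 0, and for every ε > 0 there is an R > 0 such that whenever |c| > R, the polynomial φ(D)(f·T^c g) has a zero in each of the open disks D(a₁; ε), …, D(a_N; ε), and also a zero in the open disk D(b − c; ε). -/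
open Polynomial

/-- The translate `T^c g`, i.e. `(T^c g)(x) = g(x + c)`. -/
noncomputable def transl (c : ℂ) (g : Polynomial ℂ) : Polynomial ℂ :=
  g.comp (Polynomial.X + Polynomial.C c)

lemma transl_eq_taylor (c : ℂ) (g : Polynomial ℂ) : transl c g = taylor c g := by
  rw [taylor_apply]; rfl

lemma natDegree_transl (c : ℂ) (g : Polynomial ℂ) : (transl c g).natDegree = g.natDegree := by
  rw [transl_eq_taylor, natDegree_taylor]

lemma transl_ne_zero {g : Polynomial ℂ} (hg : g ≠ 0) (c : ℂ) : transl c g ≠ 0 := by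
  rw [transl_eq_taylor]
  intro h
  apply hg
  have := congrArg (taylor (-c)) h
  rwa [taylor_taylor, neg_add_cancel, taylor_zero, map_zero] at this

lemma exists_alpha_ne_zero {α : ℕ → ℂ} {f : Polynomial ℂ} (hf : phiD α f ≠ 0) :
    ∃ n, n ≤ f.natDegree ∧ α n ≠ 0 := by
  by_contra h
  push_neg at h
  apply hf
  unfold phiD
  refine Finset.sum_eq_zero fun n hn => ?_
  rw [h n (by simpa using Nat.lt_succ_iff.mp (Finset.mem_range.mp hn)), zero_smul]

lemma ne_zero_of_phiD {α : ℕ → ℂ} {f : Polynomial ℂ} (hf : phiD α f ≠ 0) : f ≠ 0 := by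
  rintro rfl
  apply hf
  unfold phiD
  refine Finset.sum_eq_zero fun n _ => ?_
  simp

lemma iterate_derivative_taylor (t : ℂ) (p : Polynomial ℂ) (n : ℕ) :
    derivative^[n] (taylor t p) = taylor t (derivative^[n] p) := by
  induction n with
  | zero => simp
  | succ n ih =>
    rw [Function.iterate_succ_apply', ih, Function.iterate_succ_apply']
    simp only [taylor_apply, derivative_comp]
    simp

lemma phiD_taylor (α : ℕ → ℂ) (t : ℂ) (p : Polynomial ℂ) :
    phiD α (taylor t p) = taylor t (phiD α p) := by
  unfold phiD
  rw [natDegree_taylor, map_sum]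
  refine Finset.sum_congr rfl fun n _ => ?_
  rw [iterate_derivative_taylor, map_smul]

lemma natDegree_phiD_le (α : ℕ → ℂ) (p : Polynomial ℂ) :
    (phiD α p).natDegree ≤ p.natDegree := by
  unfold phiD
  refine natDegree_sum_le_of_forall_le _ _ fun n _ => ?_
  exact (natDegree_smul_le _ _).trans ((natDegree_iterate_derivative _ _).trans (Nat.sub_le _ _))

lemma coeff_phiD_key (α : ℕ → ℂ) (p : Polynomial ℂ) (k : ℕ)
    (hmin : ∀ n < k, α n = 0) (hk : k ≤ p.natDegree) :
    (phiD α p).coeff (p.natDegree - k)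
      = α k * (p.natDegree.descFactorial k : ℂ) * p.leadingCoeff := by
  unfold phiD
  rw [finset_sum_coeff]
  rw [Finset.sum_eq_single k]
  · rw [coeff_smul, coeff_iterate_derivative, Nat.sub_add_cancel hk, smul_eq_mul,
      nsmul_eq_mul, leadingCoeff]
    ring
  · intro n hn hne
    rcases lt_or_gt_of_ne hne with h | h
    · rw [hmin n h, zero_smul, coeff_zero]
    · rw [coeff_smul, coeff_iterate_derivative,
        coeff_eq_zero_of_natDegree_lt (by omega), smul_zero, smul_zero]
  · intro h
    exact absurd (Finset.mem_range.mpr (by omega)) h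

lemma root_near (p : Polynomial ℂ) (a a' : ℂ) (ε : ℝ) (hd : ‖a' - a‖ ≤ ε)
    (h : 2 ^ p.natDegree * ‖p.eval a‖ < ‖p.eval a'‖) :
    ∃ z, p.IsRoot z ∧ ‖z - a‖ < ε := by
  by_contra hcon
  push_neg at hcon
  have hp : p ≠ 0 := by
    rintro rfl
    simp at h
  have hroots : ∀ z ∈ p.roots, ε ≤ ‖z - a‖ := by
    intro z hz
    exact hcon z (isRoot_of_mem_roots hz)
  have hsplit := IsAlgClosed.splits p
  have hcard : p.roots.card = p.natDegree := (splits_iff_card_roots).mp hsplit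
  have hprod := hsplit.eq_prod_roots
  have heval : ∀ x : ℂ, ‖p.eval x‖₊ = ‖p.leadingCoeff‖₊ * (p.roots.map fun z => ‖x - z‖₊).prod := by
    intro x
    conv_lhs => rw [hprod]
    rw [eval_mul, eval_C, nnnorm_mul]
    congr 1
    rw [eval_multiset_prod]
    rw [Multiset.map_map]
    have : ‖((p.roots.map fun z => (X - C z : Polynomial ℂ)).map (eval x)).prod‖₊
        = (((p.roots.map fun z => (X - C z : Polynomial ℂ)).map (eval x)).map
            (fun y => ‖y‖₊)).prod := by
      exact map_multiset_prod (nnnormHom.toMonoidHom : ℂ →* NNReal) _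
    rw [Multiset.map_map] at this
    rw [Multiset.map_map] at this
    convert this using 2
    simp
  have hle : ∀ z ∈ p.roots, ‖a' - z‖₊ ≤ 2 * ‖a - z‖₊ := by
    intro z hz
    have h1 : ε ≤ ‖z - a‖ := hroots z hz
    rw [← NNReal.coe_le_coe]
    push_cast
    have : ‖a' - z‖ ≤ ‖a' - a‖ + ‖a - z‖ := by
      calc ‖a' - z‖ = ‖(a' - a) + (a - z)‖ := by ring_nf
        _ ≤ ‖a' - a‖ + ‖a - z‖ := norm_add_le _ _
    have h2 : ‖a - z‖ = ‖z - a‖ := by rw [norm_sub_rev]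
    nlinarith [norm_nonneg (a - z)]
  have hprodle : (p.roots.map fun z => ‖a' - z‖₊).prod
      ≤ (p.roots.map fun z => 2 * ‖a - z‖₊).prod :=
    Multiset.prod_map_le_prod_map _ _ hle
  have hsplit2 : (p.roots.map fun z => (2:NNReal) * ‖a - z‖₊).prod
      = 2 ^ p.natDegree * (p.roots.map fun z => ‖a - z‖₊).prod := by
    rw [Multiset.prod_map_mul]
    congr 1
    simp [hcard]
  have final : ‖p.eval a'‖₊ ≤ 2 ^ p.natDegree * ‖p.eval a‖₊ := by
    rw [heval a', heval a]
    calc ‖p.leadingCoeff‖₊ * (p.roots.map fun z => ‖a' - z‖₊).prod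
        ≤ ‖p.leadingCoeff‖₊ * (2 ^ p.natDegree * (p.roots.map fun z => ‖a - z‖₊).prod) := by
          rw [← hsplit2]; exact mul_le_mul_right hprodle _
      _ = 2 ^ p.natDegree * (‖p.leadingCoeff‖₊ * (p.roots.map fun z => ‖a - z‖₊).prod) := by
          ring
  rw [← NNReal.coe_le_coe] at final
  push_cast at final
  linarith

lemma grow (u v : Polynomial ℂ) (m : ℕ) (hm : 1 ≤ m) (hu : u.natDegree < m)
    (hv : v.natDegree ≤ m) (hvm : v.coeff m ≠ 0) (K : ℝ) (hK : 0 ≤ K) :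
    ∃ R : ℝ, 0 < R ∧ ∀ c : ℂ, R < ‖c‖ → K * ‖u.eval c‖ < ‖v.eval c‖ := by
  set Su := ∑ i ∈ Finset.range m, ‖u.coeff i‖ with hSu
  set Sv := ∑ i ∈ Finset.range m, ‖v.coeff i‖ with hSv
  have hSu0 : 0 ≤ Su := Finset.sum_nonneg fun i _ => norm_nonneg _
  have hSv0 : 0 ≤ Sv := Finset.sum_nonneg fun i _ => norm_nonneg _
  set L := ‖v.coeff m‖ with hL
  have hL0 : 0 < L := norm_pos_iff.mpr hvm
  refine ⟨max 1 ((Sv + K * Su + 1) / L), lt_of_lt_of_le one_pos (le_max_left _ _), ?_⟩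
  intro c hc
  have hc1 : 1 < ‖c‖ := lt_of_le_of_lt (le_max_left _ _) hc
  have hc1' : 1 ≤ ‖c‖ := le_of_lt hc1
  have hc2 : Sv + K * Su + 1 < L * ‖c‖ := by
    have := lt_of_le_of_lt (le_max_right 1 ((Sv + K * Su + 1) / L)) hc
    rw [div_lt_iff₀ hL0] at this
    linarith
  have hcp : (0:ℝ) < ‖c‖ ^ (m - 1) := pow_pos (by linarith) _
  have hub : ‖u.eval c‖ ≤ Su * ‖c‖ ^ (m - 1) := by
    rw [eval_eq_sum_range' hu]
    calc ‖∑ i ∈ Finset.range m, u.coeff i * c ^ i‖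
        ≤ ∑ i ∈ Finset.range m, ‖u.coeff i * c ^ i‖ := norm_sum_le _ _
      _ ≤ ∑ i ∈ Finset.range m, ‖u.coeff i‖ * ‖c‖ ^ (m - 1) := by
          refine Finset.sum_le_sum fun i hi => ?_
          have := Finset.mem_range.mp hi
          rw [norm_mul, norm_pow]
          exact mul_le_mul_of_nonneg_left
            (pow_le_pow_right₀ hc1' (by omega)) (norm_nonneg _)
      _ = Su * ‖c‖ ^ (m - 1) := by rw [← Finset.sum_mul]
  have hvsum : ‖∑ i ∈ Finset.range m, v.coeff i * c ^ i‖ ≤ Sv * ‖c‖ ^ (m - 1) := by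
    calc ‖∑ i ∈ Finset.range m, v.coeff i * c ^ i‖
        ≤ ∑ i ∈ Finset.range m, ‖v.coeff i * c ^ i‖ := norm_sum_le _ _
      _ ≤ ∑ i ∈ Finset.range m, ‖v.coeff i‖ * ‖c‖ ^ (m - 1) := by
          refine Finset.sum_le_sum fun i hi => ?_
          have := Finset.mem_range.mp hi
          rw [norm_mul, norm_pow]
          exact mul_le_mul_of_nonneg_left
            (pow_le_pow_right₀ hc1' (by omega)) (norm_nonneg _)
      _ = Sv * ‖c‖ ^ (m - 1) := by rw [← Finset.sum_mul]
  have hvb : L * ‖c‖ ^ m - Sv * ‖c‖ ^ (m - 1) ≤ ‖v.eval c‖ := by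
    rw [eval_eq_sum_range' (Nat.lt_succ_of_le hv), Finset.sum_range_succ]
    have h1 : ‖v.coeff m * c ^ m‖ - ‖∑ i ∈ Finset.range m, v.coeff i * c ^ i‖
        ≤ ‖∑ i ∈ Finset.range m, v.coeff i * c ^ i + v.coeff m * c ^ m‖ := by
      have := norm_sub_norm_le (v.coeff m * c ^ m)
        (-(∑ i ∈ Finset.range m, v.coeff i * c ^ i))
      simp only [norm_neg] at this
      calc ‖v.coeff m * c ^ m‖ - ‖∑ i ∈ Finset.range m, v.coeff i * c ^ i‖
          ≤ ‖v.coeff m * c ^ m - -(∑ i ∈ Finset.range m, v.coeff i * c ^ i)‖ := this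
        _ = ‖∑ i ∈ Finset.range m, v.coeff i * c ^ i + v.coeff m * c ^ m‖ := by
            rw [sub_neg_eq_add, add_comm]
    rw [norm_mul, norm_pow] at h1
    linarith
  have hpow : ‖c‖ ^ m = ‖c‖ * ‖c‖ ^ (m - 1) := by
    conv_lhs => rw [show m = (m - 1) + 1 by omega]
    rw [pow_succ]
    ring
  have hKu : K * ‖u.eval c‖ ≤ K * Su * ‖c‖ ^ (m - 1) := by
    rw [mul_assoc]
    exact mul_le_mul_of_nonneg_left hub hK
  rw [hpow] at hvb
  nlinarith

noncomputable def Psi (α : ℕ → ℂ) (f g : Polynomial ℂ) (x : ℂ) : Polynomial ℂ :=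
  ∑ n ∈ Finset.range (f.natDegree + g.natDegree + 1), ∑ j ∈ Finset.range (n + 1),
    (α n * (n.choose j : ℂ) * (derivative^[n - j] f).eval x) •
      ((derivative^[j] g).comp (C x + X))

lemma psi_eval (α : ℕ → ℂ) (f g : Polynomial ℂ) (f0 : f ≠ 0) (g0 : g ≠ 0) (x c : ℂ) :
    (Psi α f g x).eval c = (phiD α (f * transl c g)).eval x := by
  have hdeg : (f * transl c g).natDegree = f.natDegree + g.natDegree := by
    rw [natDegree_mul f0 (transl_ne_zero g0 c), natDegree_transl]
  have htr : ∀ j, derivative^[j] (transl c g) = transl c (derivative^[j] g) := fun j => by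
    rw [transl_eq_taylor, transl_eq_taylor, iterate_derivative_taylor]
  unfold phiD Psi
  rw [hdeg]
  simp only [iterate_derivative_mul]
  simp only [htr]
  simp only [eval_finset_sum, eval_smul, smul_eq_mul,
    transl, eval_comp, eval_add, eval_C, eval_X, nsmul_eq_mul, eval_mul, eval_natCast,
    Finset.mul_sum, Nat.succ_eq_add_one]
  refine Finset.sum_congr rfl fun n _ => Finset.sum_congr rfl fun j _ => ?_
  ring

lemma psi_natDegree_le (α : ℕ → ℂ) (f g : Polynomial ℂ) (x : ℂ) :
    (Psi α f g x).natDegree ≤ g.natDegree := by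
  unfold Psi
  refine natDegree_sum_le_of_forall_le _ _ fun n _ => ?_
  refine natDegree_sum_le_of_forall_le _ _ fun j _ => ?_
  refine (natDegree_smul_le _ _).trans ?_
  rw [natDegree_comp]
  have h1 : (C x + X : Polynomial ℂ).natDegree = 1 := by
    rw [add_comm, natDegree_X_add_C]
  rw [h1, mul_one]
  exact (natDegree_iterate_derivative _ _).trans (Nat.sub_le _ _)

lemma psi_coeff_top (α : ℕ → ℂ) (f g : Polynomial ℂ) (x : ℂ) :
    (Psi α f g x).coeff g.natDegree = g.leadingCoeff * (phiD α f).eval x := by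
  have h1 : (C x + X : Polynomial ℂ).natDegree = 1 := by
    rw [add_comm, natDegree_X_add_C]
  unfold Psi
  rw [finset_sum_coeff]
  have hinner : ∀ n, (∑ j ∈ Finset.range (n + 1),
      (α n * (n.choose j : ℂ) * (derivative^[n - j] f).eval x) •
        ((derivative^[j] g).comp (C x + X))).coeff g.natDegree
      = α n * (derivative^[n] f).eval x * g.leadingCoeff := by
    intro n
    rw [finset_sum_coeff]
    rw [Finset.sum_eq_single 0]
    · rw [coeff_smul, smul_eq_mul]
      have hnd : (g.comp (C x + X)).natDegree = g.natDegree := by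
        rw [natDegree_comp, h1, mul_one]
      have hcoe : (g.comp (C x + X)).coeff g.natDegree = g.leadingCoeff := by
        have hlc : (C x + X : Polynomial ℂ).leadingCoeff = 1 := by
          rw [add_comm]; exact monic_X_add_C x
        rw [← hnd, coeff_natDegree, leadingCoeff_comp (by rw [h1]; norm_num), hlc,
          one_pow, mul_one]
      simp only [Nat.sub_zero, Function.iterate_zero_apply, Nat.choose_zero_right,
        Nat.cast_one, mul_one, hcoe]
    · intro j hj hj0
      rw [coeff_smul]
      rcases le_or_gt j g.natDegree with hle | hlt
      · have : ((derivative^[j] g).comp (C x + X)).natDegree < g.natDegree := by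
          rw [natDegree_comp, h1, mul_one]
          have := natDegree_iterate_derivative g j
          omega
        rw [coeff_eq_zero_of_natDegree_lt this, smul_zero]
      · rw [iterate_derivative_eq_zero hlt, zero_comp, coeff_zero, smul_zero]
    · intro h
      exact absurd (Finset.mem_range.mpr (by omega)) h
  rw [Finset.sum_congr rfl fun n _ => hinner n]
  unfold phiD
  rw [eval_finset_sum, Finset.mul_sum]
  rw [← Finset.sum_subset (Finset.range_subset_range.mpr (by omega :
      f.natDegree + 1 ≤ f.natDegree + g.natDegree + 1))]
  · exact Finset.sum_congr rfl fun n _ => by rw [eval_smul, smul_eq_mul]; ring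
  · intro n hn hn'
    have : f.natDegree < n := by
      have := Finset.mem_range.mp hn
      simp only [Finset.mem_range] at hn'
      omega
    rw [iterate_derivative_eq_zero this, eval_zero, mul_zero, zero_mul]

lemma core (α : ℕ → ℂ) (f g : Polynomial ℂ) (hf : phiD α f ≠ 0) (hg : phiD α g ≠ 0)
    (a : ℂ) (ha : (phiD α f).IsRoot a) {ε : ℝ} (hε : 0 < ε) :
    ∃ R : ℝ, 0 < R ∧ ∀ c : ℂ, R < ‖c‖ →
      ∃ z, (phiD α (f * transl c g)).IsRoot z ∧ ‖z - a‖ < ε := by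
  have f0 : f ≠ 0 := ne_zero_of_phiD hf
  have g0 : g ≠ 0 := ne_zero_of_phiD hg
  rcases Nat.eq_zero_or_pos g.natDegree with hm0 | hm
  · -- g is a nonzero constant
    have hgC : g = C (g.coeff 0) := eq_C_of_natDegree_eq_zero hm0
    have ht : g.coeff 0 ≠ 0 := fun h => g0 (by rw [hgC, h, map_zero])
    refine ⟨1, one_pos, fun c _ => ⟨a, ?_, by simpa using hε⟩⟩
    have htrans : transl c g = C (g.coeff 0) := by
      unfold transl
      nth_rewrite 1 [hgC]
      rw [C_comp]
    have hmul : f * transl c g = g.coeff 0 • f := by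
      rw [htrans, smul_eq_C_mul, mul_comm]
    have hphi : phiD α (f * transl c g) = g.coeff 0 • phiD α f := by
      rw [hmul]
      unfold phiD
      have hnd : (g.coeff 0 • f).natDegree = f.natDegree := by
        rw [smul_eq_C_mul, natDegree_C_mul ht]
      rw [hnd, Finset.smul_sum]
      refine Finset.sum_congr rfl fun n _ => ?_
      rw [iterate_derivative_smul, smul_comm]
    rw [IsRoot, hphi, eval_smul, smul_eq_mul, ha.eq_zero, mul_zero]
  · -- main case : 1 ≤ deg g
    -- pick a' close to a with (phiD α f).eval a' ≠ 0
    have hfin : {x : ℂ | (phiD α f).IsRoot x}.Finite := finite_setOf_isRoot hf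
    have hIoo : (Set.Ioo (0:ℝ) ε).Infinite := Set.Ioo_infinite hε
    have hinj : Set.InjOn (fun t : ℝ => a + (t : ℂ)) (Set.Ioo 0 ε) := by
      intro s _ t _ h
      simp only [add_right_inj, Complex.ofReal_inj] at h
      exact h
    have hne : (((fun t : ℝ => a + (t : ℂ)) '' Set.Ioo 0 ε) \
        {x : ℂ | (phiD α f).IsRoot x}).Nonempty :=
      ((hIoo.image hinj).diff hfin).nonempty
    obtain ⟨a', hmem, hnroot⟩ := hne
    obtain ⟨t, htIoo, rfl⟩ := hmem
    have ha' : (phiD α f).eval (a + (t : ℂ)) ≠ 0 := fun h => hnroot h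
    have hdist : ‖(a + (t : ℂ)) - a‖ ≤ ε := by
      simp only [add_sub_cancel_left, Complex.norm_real]
      rw [Real.norm_eq_abs, abs_of_pos htIoo.1]
      exact le_of_lt htIoo.2
    set a' := a + (t : ℂ)
    set m := g.natDegree with hmdef
    set u := Psi α f g a with hu
    set v := Psi α f g a' with hv
    have hucoeff : u.coeff m = 0 := by
      rw [hu, psi_coeff_top, ha.eq_zero, mul_zero]
    have hultm : u.natDegree < m := by
      rcases eq_or_ne u 0 with h0 | h0
      · rw [h0, natDegree_zero]; omega
      · refine lt_of_le_of_ne (psi_natDegree_le _ _ _ _) fun he => ?_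
        have hlc : u.leadingCoeff ≠ 0 := leadingCoeff_ne_zero.mpr h0
        rw [leadingCoeff, he] at hlc
        exact hlc hucoeff
    have hvcoeff : v.coeff m ≠ 0 := by
      rw [hv, psi_coeff_top]
      exact mul_ne_zero (leadingCoeff_ne_zero.mpr g0) ha'
    obtain ⟨R, hR0, hRe⟩ := grow u v m hm hultm (psi_natDegree_le _ _ _ _) hvcoeff
      (2 ^ (f.natDegree + g.natDegree)) (by positivity)
    refine ⟨R, hR0, fun c hc => ?_⟩
    have key := hRe c hc
    rw [hu, hv, psi_eval α f g f0 g0 a c, psi_eval α f g f0 g0 a' c] at key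
    set p := phiD α (f * transl c g) with hp
    have hdle : p.natDegree ≤ f.natDegree + g.natDegree := by
      refine (natDegree_phiD_le _ _).trans ?_
      rw [natDegree_mul f0 (transl_ne_zero g0 c), natDegree_transl]
    refine root_near p a a' ε hdist ?_
    calc 2 ^ p.natDegree * ‖p.eval a‖
        ≤ 2 ^ (f.natDegree + g.natDegree) * ‖p.eval a‖ := by
          gcongr <;> norm_num
      _ < ‖p.eval a'‖ := key

/-- Lemma 3.3: if neither `φ(D)f` nor `φ(D)g` is identically `0`, `a₁,…,a_N` are zeros of
`φ(D)f` and `b` is a zero of `φ(D)g`, then `φ(D)(f·T^c g)` is never identically `0`, and for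
every `ε > 0` there is `R > 0` such that whenever `|c| > R`, `φ(D)(f·T^c g)` has a zero in
each disk `D(aᵢ; ε)` and a zero in `D(b − c; ε)`. -/
theorem stmt14 (α : ℕ → ℂ) (f g : Polynomial ℂ)
    (hf : phiD α f ≠ 0) (hg : phiD α g ≠ 0)
    (N : ℕ) (a : Fin N → ℂ) (ha : ∀ i, (phiD α f).IsRoot (a i))
    (b : ℂ) (hb : (phiD α g).IsRoot b) :
    (∀ c : ℂ, phiD α (f * transl c g) ≠ 0) ∧
    ∀ ε : ℝ, 0 < ε → ∃ R : ℝ, 0 < R ∧ ∀ c : ℂ, R < ‖c‖ →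
      (∀ i, ∃ z : ℂ, (phiD α (f * transl c g)).IsRoot z ∧ ‖z - a i‖ < ε) ∧
      (∃ z : ℂ, (phiD α (f * transl c g)).IsRoot z ∧ ‖z - (b - c)‖ < ε) := by
  have f0 : f ≠ 0 := ne_zero_of_phiD hf
  have g0 : g ≠ 0 := ne_zero_of_phiD hg
  constructor
  · -- Part 1 : never identically zero
    intro c h0
    obtain ⟨n₁, hn₁, hα₁⟩ := exists_alpha_ne_zero hf
    have hex : ∃ n, α n ≠ 0 := ⟨n₁, hα₁⟩
    set k := Nat.find hex with hkdef
    have hk : α k ≠ 0 := Nat.find_spec hex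
    have hkmin : ∀ n < k, α n = 0 := fun n hn => not_not.mp (Nat.find_min hex hn)
    have hkle : k ≤ f.natDegree := (Nat.find_min' hex hα₁).trans hn₁
    have hdeg : (f * transl c g).natDegree = f.natDegree + g.natDegree := by
      rw [natDegree_mul f0 (transl_ne_zero g0 c), natDegree_transl]
    have hk2 : k ≤ (f * transl c g).natDegree := by rw [hdeg]; omega
    have hco := coeff_phiD_key α (f * transl c g) k hkmin hk2
    rw [h0, coeff_zero] at hco
    have hdesc : ((f * transl c g).natDegree.descFactorial k : ℂ) ≠ 0 := by
      rw [Nat.cast_ne_zero]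
      intro h
      rw [Nat.descFactorial_eq_zero_iff_lt] at h
      omega
    exact (mul_ne_zero (mul_ne_zero hk hdesc)
      (leadingCoeff_ne_zero.mpr (mul_ne_zero f0 (transl_ne_zero g0 c)))) hco.symm
  · -- Part 2
    intro ε hε
    choose Ra hRa0 hRa using fun i => core α f g hf hg (a i) (ha i) hε
    obtain ⟨Rb, hRb0, hRb⟩ := core α g f hg hf b hb hε
    have hsum_nonneg : (0:ℝ) ≤ ∑ i, Ra i :=
      Finset.sum_nonneg fun i _ => le_of_lt (hRa0 i)
    refine ⟨Rb + ∑ i, Ra i, by linarith, fun c hc => ?_⟩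
    have hcnorm : Rb + ∑ i, Ra i < ‖c‖ := by exact hc
    constructor
    · intro i
      have hi : Ra i < ‖c‖ := by
        have : Ra i ≤ ∑ j, Ra j :=
          Finset.single_le_sum (fun j _ => le_of_lt (hRa0 j)) (Finset.mem_univ i)
        linarith
      obtain ⟨z, hz, hzd⟩ := hRa i c hi
      exact ⟨z, hz, by exact hzd⟩
    · have hcneg : Rb < ‖-c‖ := by rw [norm_neg]; linarith
      obtain ⟨z, hz, hzd⟩ := hRb (-c) hcneg
      have hkey : phiD α (g * transl (-c) f) = taylor (-c) (phiD α (f * transl c g)) := by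
        rw [← phiD_taylor]
        congr 1
        rw [taylor_apply, mul_comp]
        have h1 : f.comp (X + C (-c)) = transl (-c) f := rfl
        have h2 : (transl c g).comp (X + C (-c)) = g := by
          unfold transl
          rw [comp_assoc, add_comp, X_comp, C_comp]
          rw [add_assoc, ← C_add, neg_add_cancel, C_0, add_zero, comp_X]
        rw [h1, h2, mul_comm]
      rw [IsRoot, hkey, taylor_apply, eval_comp, eval_add, eval_X, eval_C] at hz
      refine ⟨z - c, ?_, ?_⟩
      · rwa [IsRoot, sub_eq_add_neg]
      · have heq : z - c - (b - c) = z - b := by ring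
        rw [heq]
        exact hzd
end
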